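/- Let g be holomorphic on a neighborhood of the closed unit disk with g(0) = 0, |g(e^{iθ})| = 1 for all θ, and suppose equality holds in the isoperimetric inequality: ∫_{B₁}|g'|² dA = π. Then g(z) = a z for some constant a with |a| = 1. -/

import Mathlib

open MeasureTheory Complex Real


lemma integral_exp_diff (m n : ℕ) :
    (∫ θ in Set.Ioo (-π) π, Complex.exp ((((m : ℂ)) - n) * θ * Complex.I)) =
      if m = n then (2 * π : ℂ) else 0 := by
  rw [← MeasureTheory.integral_Ioc_eq_integral_Ioo,
    ← intervalIntegral.integral_of_le (by linarith [Real.pi_pos] : -π ≤ π)]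
  rcases eq_or_ne m n with h | h
  · subst h
    simp [Complex.ofReal_neg, two_mul]
  · rw [if_neg h]
    have hk : ((m : ℂ) - n) * Complex.I ≠ 0 := by
      simp [Complex.ext_iff, sub_eq_zero]
      exact_mod_cast fun hmn => h (Nat.cast_injective hmn)
    have : ∀ θ : ℝ, ((m : ℂ) - n) * θ * Complex.I = (((m : ℂ) - n) * Complex.I) * θ := by
      intro θ; ring
    simp_rw [this]
    rw [integral_exp_mul_complex hk]
    have key : Complex.exp ((((m : ℂ) - n) * Complex.I) * (π : ℝ))
        = Complex.exp ((((m : ℂ) - n) * Complex.I) * ((-π : ℝ) : ℂ)) := by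
      rw [show (((m : ℂ) - n) * Complex.I) * (π : ℝ)
          = (((m : ℂ) - n) * Complex.I) * ((-π : ℝ) : ℂ)
            + (((m : ℤ) - n : ℤ) : ℂ) * (2 * (π : ℝ) * Complex.I) by push_cast; ring,
        Complex.exp_add, Complex.exp_int_mul_two_pi_mul_I, mul_one]
    rw [key, sub_self, zero_div]

set_option maxHeartbeats 1000000 in
lemma parseval_aux (c : ℕ → ℂ) (hc : Summable fun n => ‖c n‖) :
    (∫ θ in Set.Ioo (-π) π, ‖∑' n : ℕ, c n * Complex.exp (n * θ * Complex.I)‖ ^ 2) =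
      2 * π * ∑' n : ℕ, ‖c n‖ ^ 2 := by
  -- summability facts
  have hterm : ∀ θ : ℝ, ∀ n : ℕ, ‖c n * Complex.exp (n * θ * Complex.I)‖ = ‖c n‖ := by
    intro θ n
    rw [norm_mul]
    have : ((n : ℂ) * θ * Complex.I) = ((n * θ : ℝ) : ℂ) * Complex.I := by push_cast; ring
    rw [this, Complex.norm_exp_ofReal_mul_I, mul_one]
  have hsum : ∀ θ : ℝ, Summable fun n => c n * Complex.exp (n * θ * Complex.I) := by
    intro θ
    apply Summable.of_norm
    simpa only [hterm θ] using hc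
  have hcsum : Summable c := by
    apply Summable.of_norm; exact hc
  have hpair : Summable (fun p : ℕ × ℕ => ‖c p.1‖ * ‖c p.2‖) :=
    hc.mul_of_nonneg hc (fun n => norm_nonneg _) (fun n => norm_nonneg _)
  -- pointwise product expansion
  set F : ℝ → ℂ := fun θ => ∑' n : ℕ, c n * Complex.exp (n * θ * Complex.I) with hF
  have hpoint : ∀ θ : ℝ, ((‖F θ‖ ^ 2 : ℝ) : ℂ)
      = ∑' p : ℕ × ℕ, (c p.1 * (starRingEnd ℂ) (c p.2))
          * Complex.exp (((p.1 : ℂ) - p.2) * θ * Complex.I) := by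
    intro θ
    have h1 : ((‖F θ‖ ^ 2 : ℝ) : ℂ) = F θ * (starRingEnd ℂ) (F θ) := by
      rw [Complex.mul_conj, Complex.normSq_eq_norm_sq]
    have hconjsum : Summable fun n => (starRingEnd ℂ) (c n * Complex.exp (n * θ * Complex.I)) :=
      (hsum θ).map (starRingEnd ℂ) (Complex.continuous_conj)
    have hFc : (starRingEnd ℂ) (F θ) = ∑' n, (starRingEnd ℂ) (c n * Complex.exp (n * θ * Complex.I)) := by
      rw [hF]
      exact ((hsum θ).hasSum.map (starRingEnd ℂ) Complex.continuous_conj).tsum_eq.symm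
    have hps : Summable fun p : ℕ × ℕ =>
        (c p.1 * Complex.exp (p.1 * θ * Complex.I)) *
          (starRingEnd ℂ) (c p.2 * Complex.exp (p.2 * θ * Complex.I)) := by
      apply Summable.of_norm
      apply Summable.of_nonneg_of_le (fun p => norm_nonneg _) _ hpair
      intro p
      rw [norm_mul, RCLike.norm_conj, hterm θ, hterm θ]
    rw [h1, hFc, hF, (hsum θ).tsum_mul_tsum hconjsum hps]
    congr 1
    ext p
    rw [map_mul, ← Complex.exp_conj]
    have : (starRingEnd ℂ) ((p.2 : ℂ) * θ * Complex.I) = -((p.2:ℂ) * θ * Complex.I) := by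
      simp [Complex.ext_iff]
    rw [this, show ((p.1 : ℂ) - p.2) * θ * Complex.I
        = (p.1 : ℂ) * θ * Complex.I + -((p.2 : ℂ) * θ * Complex.I) by ring, Complex.exp_add]
    ring
  -- abbreviation for the terms
  set T : ℕ × ℕ → ℝ → ℂ := fun p θ => (c p.1 * (starRingEnd ℂ) (c p.2))
      * Complex.exp (((p.1 : ℂ) - p.2) * θ * Complex.I) with hT
  have hmeas : ∀ p : ℕ × ℕ, AEStronglyMeasurable (T p)
      (volume.restrict (Set.Ioo (-π) π)) := by
    intro p
    apply Continuous.aestronglyMeasurable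
    fun_prop
  have hM : volume (Set.Ioo (-π) π) ≠ ⊤ := by
    rw [Real.volume_Ioo]; exact ENNReal.ofReal_ne_top
  have hnorm : ∀ p : ℕ × ℕ, ∀ θ : ℝ, ‖T p θ‖₊ = ‖c p.1‖₊ * ‖c p.2‖₊ := by
    intro p θ
    have h2 : ‖T p θ‖ = ‖c p.1‖ * ‖c p.2‖ := by
      rw [hT]
      simp only [norm_mul, RCLike.norm_conj]
      have : (((p.1 : ℂ)) - p.2) * θ * Complex.I = (((p.1 : ℝ) - p.2) * θ : ℝ) * Complex.I := by
        push_cast; ring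
      rw [this, Complex.norm_exp_ofReal_mul_I, mul_one]
    ext
    simpa using h2
  have hlint : (∑' p : ℕ × ℕ, ∫⁻ θ in Set.Ioo (-π) π, ‖T p θ‖₊) ≠ ⊤ := by
    have heach : ∀ p : ℕ × ℕ, (∫⁻ θ in Set.Ioo (-π) π, (‖T p θ‖₊ : ENNReal))
        = ((‖c p.1‖₊ * ‖c p.2‖₊ : NNReal) : ENNReal) * volume (Set.Ioo (-π) π) := by
      intro p
      rw [setLIntegral_congr_fun measurableSet_Ioo
        (fun θ _ => by rw [hnorm p θ])]
      exact setLIntegral_const _ _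
    simp_rw [heach]
    rw [ENNReal.tsum_mul_right]
    apply ENNReal.mul_ne_top _ hM
    rw [ENNReal.tsum_coe_ne_top_iff_summable]
    rw [← NNReal.summable_coe]
    simpa [NNReal.coe_mul, coe_nnnorm] using hpair
  have hint : (∫ θ in Set.Ioo (-π) π, ((‖F θ‖ ^ 2 : ℝ) : ℂ))
      = ∑' p : ℕ × ℕ, ∫ θ in Set.Ioo (-π) π, T p θ := by
    rw [setIntegral_congr_fun measurableSet_Ioo
      (fun θ _ => hpoint θ)]
    exact integral_tsum hmeas hlint
  have hTi : ∀ p : ℕ × ℕ, (∫ θ in Set.Ioo (-π) π, T p θ)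
      = (c p.1 * (starRingEnd ℂ) (c p.2)) * (if p.1 = p.2 then (2 * π : ℂ) else 0) := by
    intro p
    rw [hT]
    simp only
    rw [MeasureTheory.integral_const_mul, integral_exp_diff]
  have hdiag : (∑' p : ℕ × ℕ, (c p.1 * (starRingEnd ℂ) (c p.2))
      * (if p.1 = p.2 then (2 * π : ℂ) else 0))
      = ∑' n : ℕ, ((‖c n‖ ^ 2 : ℝ) : ℂ) * (2 * π : ℂ) := by
    have hinj : Function.Injective (fun n : ℕ => ((n, n) : ℕ × ℕ)) :=
      fun a b hab => (Prod.ext_iff.mp hab).1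
    have hsupp : Function.support (fun p : ℕ × ℕ => (c p.1 * (starRingEnd ℂ) (c p.2))
        * (if p.1 = p.2 then (2 * π : ℂ) else 0)) ⊆ Set.range (fun n : ℕ => ((n, n) : ℕ × ℕ)) := by
      intro p hp
      have : p.1 = p.2 := by
        by_contra hne
        exact hp (by simp [hne])
      exact ⟨p.1, by rw [Prod.ext_iff]; exact ⟨rfl, this⟩⟩
    rw [← Function.Injective.tsum_eq hinj hsupp]
    congr 1
    ext n
    rw [if_pos rfl, Complex.mul_conj, Complex.normSq_eq_norm_sq]
  -- put everything together
  have final : ((∫ θ in Set.Ioo (-π) π, ‖F θ‖ ^ 2 : ℝ) : ℂ)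
      = ((2 * π * ∑' n : ℕ, ‖c n‖ ^ 2 : ℝ) : ℂ) := by
    rw [show ((∫ θ in Set.Ioo (-π) π, ‖F θ‖ ^ 2 : ℝ) : ℂ)
        = ∫ θ in Set.Ioo (-π) π, ((‖F θ‖ ^ 2 : ℝ) : ℂ) from (integral_ofReal (𝕜 := ℂ)).symm, hint]
    simp_rw [hTi]
    rw [hdiag, tsum_mul_right, Complex.ofReal_mul, ofReal_tsum, mul_comm]
    push_cast
    ring_nf
  have goal2 : (∫ θ in Set.Ioo (-π) π, ‖F θ‖ ^ 2) = 2 * π * ∑' n : ℕ, ‖c n‖ ^ 2 := by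
    exact_mod_cast final
  simpa only [hF] using goal2

/-- Taylor coefficients' HasSum, convenient form. -/
lemma hasSum_coeff {f : ℂ → ℂ} {R : ℝ} (hf : DifferentiableOn ℂ f (Metric.ball 0 R))
    {z : ℂ} (hz : z ∈ Metric.ball 0 R) :
    HasSum (fun n : ℕ => ((Nat.factorial n : ℂ)⁻¹ * iteratedDeriv n f 0) * z ^ n) (f z) := by
  have := Complex.hasSum_taylorSeries_on_ball hf hz
  simp only [sub_zero, smul_eq_mul] at this
  convert this using 2 with n
  case e'_3 => rfl
  ring

lemma summable_coeff {a : ℕ → ℂ} {t : ℝ} (h : Summable fun n => a n * (t : ℂ) ^ n)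
    {s : ℝ} (hs : 0 ≤ s) (hst : s < t) :
    Summable fun n => ‖a n‖ * s ^ n := by
  have ht : 0 < t := lt_of_le_of_lt hs hst
  have htt : Filter.Tendsto (fun n => ‖a n * (t : ℂ) ^ n‖) Filter.atTop (nhds 0) := by
    have := h.tendsto_atTop_zero
    simpa using this.norm
  obtain ⟨C, hC⟩ := htt.bddAbove_range
  simp only [mem_upperBounds, Set.forall_mem_range] at hC
  have hC0 : 0 ≤ C := le_trans (norm_nonneg _) (hC 0)
  have hgeo : Summable fun n : ℕ => C * (s / t) ^ n :=
    (summable_geometric_of_lt_one (by positivity)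
      (by rw [div_lt_one ht]; exact hst)).mul_left C
  refine Summable.of_nonneg_of_le (fun n => by positivity) (fun n => ?_) hgeo
  have h1 : ‖a n‖ * t ^ n ≤ C := by
    have := hC n
    rwa [norm_mul, norm_pow, Complex.norm_real, Real.norm_eq_abs, abs_of_pos ht] at this
  have h2 : ‖a n‖ ≤ C / t ^ n := by
    rw [le_div_iff₀ (by positivity)]; exact h1
  calc ‖a n‖ * s ^ n ≤ C / t ^ n * s ^ n :=
        mul_le_mul_of_nonneg_right h2 (by positivity)
    _ = C * (s / t) ^ n := by rw [div_pow]; ring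

lemma area_eq {h : ℂ → ℂ} {R : ℝ} (hR : 1 < R) (hd : DifferentiableOn ℂ h (Metric.ball 0 R))
    {b : ℕ → ℂ} (hb : ∀ z ∈ Metric.ball (0 : ℂ) R, HasSum (fun n => b n * z ^ n) (h z))
    (hbs : Summable fun n => ‖b n‖) (hbs2 : Summable fun n => ‖b n‖ ^ 2) :
    (∫ z in Metric.ball (0 : ℂ) 1, ‖h z‖ ^ 2) = π * ∑' n : ℕ, ‖b n‖ ^ 2 / (n + 1) := by
  have hπ := Real.pi_pos
  -- polar coordinates
  have key := Complex.integral_comp_polarCoord_symm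
    (Set.indicator (Metric.ball (0 : ℂ) 1) (fun z => (‖h z‖ ^ 2 : ℝ)))
  rw [MeasureTheory.integral_indicator (measurableSet_ball)] at key
  rw [← key]
  -- rewrite as integral over Ioo 0 1 ×ˢ Ioo (-π) π
  have habs : ∀ p : ℝ × ℝ, 0 < p.1 → ‖(Complex.polarCoord.symm p)‖ = p.1 := by
    intro p hp
    rw [Complex.norm_polarCoord_symm, abs_of_pos hp]
  have step1 : (∫ p in polarCoord.target,
        p.1 • (Set.indicator (Metric.ball (0 : ℂ) 1) (fun z => (‖h z‖ ^ 2 : ℝ)))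
          (Complex.polarCoord.symm p))
      = ∫ p in Set.Ioo (0 : ℝ) 1 ×ˢ Set.Ioo (-π) π,
          p.1 * ‖h (Complex.polarCoord.symm p)‖ ^ 2 := by
    rw [setIntegral_congr_fun polarCoord.open_target.measurableSet
      (g := Set.indicator (Set.Ioo (0 : ℝ) 1 ×ˢ Set.Ioo (-π) π)
        (fun p : ℝ × ℝ => p.1 * ‖h (Complex.polarCoord.symm p)‖ ^ 2)) ?_]
    · rw [MeasureTheory.setIntegral_indicator (by measurability)]
      congr 1
      rw [Set.inter_eq_self_of_subset_right]
      rw [polarCoord_target]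
      exact Set.prod_mono Set.Ioo_subset_Ioi_self le_rfl
    · intro p hp
      rw [polarCoord_target] at hp
      obtain ⟨hp1, hp2⟩ := hp
      have hball : (Complex.polarCoord.symm p ∈ Metric.ball (0 : ℂ) 1) ↔ p.1 < 1 := by
        rw [Metric.mem_ball, dist_zero_right, habs p hp1]
      by_cases hlt : p.1 < 1
      · have e1 := Set.indicator_of_mem (hball.mpr hlt) (fun z : ℂ => (‖h z‖ ^ 2 : ℝ))
        have e2 := Set.indicator_of_mem (show p ∈ Set.Ioo (0:ℝ) 1 ×ˢ Set.Ioo (-π) π from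
          ⟨⟨hp1, hlt⟩, hp2⟩) (fun p : ℝ × ℝ => p.1 * ‖h (Complex.polarCoord.symm p)‖ ^ 2)
        simp only [e1, e2, smul_eq_mul]
      · have e1 := Set.indicator_of_notMem (fun hm => hlt (hball.mp hm))
          (fun z : ℂ => (‖h z‖ ^ 2 : ℝ))
        have e2 := Set.indicator_of_notMem (show p ∉ Set.Ioo (0:ℝ) 1 ×ˢ Set.Ioo (-π) π from
          fun hm => hlt hm.1.2) (fun p : ℝ × ℝ => p.1 * ‖h (Complex.polarCoord.symm p)‖ ^ 2)
        simp only [e1, e2, smul_zero]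
  rw [step1]
  -- continuity and integrability
  have hcs : Continuous (fun p : ℝ × ℝ => (Complex.polarCoord.symm p : ℂ)) := by
    simp only [Complex.polarCoord_symm_apply]
    fun_prop
  have hhc : ContinuousOn h (Metric.ball 0 R) := hd.continuousOn
  have hmap : ∀ p ∈ Set.Icc (0:ℝ) 1 ×ˢ Set.Icc (-π) π,
      (Complex.polarCoord.symm p : ℂ) ∈ Metric.ball (0:ℂ) R := by
    intro p hp
    rw [Metric.mem_ball, dist_zero_right, Complex.norm_polarCoord_symm]
    calc |p.1| ≤ 1 := abs_le.mpr ⟨le_trans (by norm_num) hp.1.1, hp.1.2⟩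
      _ < R := hR
  have hGcont : ContinuousOn (fun p : ℝ × ℝ => p.1 * ‖h (Complex.polarCoord.symm p)‖ ^ 2)
      (Set.Icc (0:ℝ) 1 ×ˢ Set.Icc (-π) π) := by
    apply ContinuousOn.mul continuous_fst.continuousOn
    exact ((hhc.comp hcs.continuousOn hmap).norm.pow 2)
  have hGint : IntegrableOn (fun p : ℝ × ℝ => p.1 * ‖h (Complex.polarCoord.symm p)‖ ^ 2)
      (Set.Ioo (0:ℝ) 1 ×ˢ Set.Ioo (-π) π) := by
    apply (hGcont.integrableOn_compact (isCompact_Icc.prod isCompact_Icc)).mono_set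
    exact Set.prod_mono Set.Ioo_subset_Icc_self Set.Ioo_subset_Icc_self
  rw [MeasureTheory.Measure.volume_eq_prod] at hGint ⊢
  rw [MeasureTheory.setIntegral_prod _ hGint]
  -- inner integral via Parseval
  have hinner : ∀ r ∈ Set.Ioo (0:ℝ) 1,
      (∫ θ in Set.Ioo (-π) π, (r : ℝ) * ‖h (Complex.polarCoord.symm (r, θ))‖ ^ 2)
        = ∑' n : ℕ, (2 * π * ‖b n‖ ^ 2) * r ^ (2 * n + 1) := by
    intro r hr
    obtain ⟨hr0, hr1⟩ := hr
    have hz : ∀ θ : ℝ, (Complex.polarCoord.symm (r, θ) : ℂ)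
        = (r : ℂ) * Complex.exp (θ * Complex.I) := by
      intro θ
      rw [Complex.polarCoord_symm_apply, Complex.exp_mul_I]
      simp [Complex.ofReal_cos, Complex.ofReal_sin]
    have hsum_r : ∀ θ : ℝ, (∑' n : ℕ, (b n * (r:ℂ) ^ n) * Complex.exp (n * θ * Complex.I))
        = h (Complex.polarCoord.symm (r, θ)) := by
      intro θ
      have hzball : (r : ℂ) * Complex.exp (θ * Complex.I) ∈ Metric.ball (0:ℂ) R := by
        rw [Metric.mem_ball, dist_zero_right, norm_mul]
        rw [Complex.norm_exp_ofReal_mul_I, mul_one, Complex.norm_real, Real.norm_eq_abs,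
          abs_of_pos hr0]
        linarith
      have hS := hb _ hzball
      rw [hz θ]
      refine (HasSum.tsum_eq ?_)
      convert hS using 2 with n
      rw [mul_pow, ← Complex.exp_nat_mul]
      ring_nf
    have hsummable : Summable fun n : ℕ => ‖b n * (r:ℂ) ^ n‖ := by
      apply Summable.of_nonneg_of_le (fun n => norm_nonneg _) _ hbs
      intro n
      rw [norm_mul, norm_pow, Complex.norm_real, Real.norm_eq_abs, abs_of_pos hr0]
      exact mul_le_of_le_one_right (norm_nonneg _) (pow_le_one₀ hr0.le hr1.le)
    calc (∫ θ in Set.Ioo (-π) π, (r : ℝ) * ‖h (Complex.polarCoord.symm (r, θ))‖ ^ 2)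
        = r * ∫ θ in Set.Ioo (-π) π,
            ‖∑' n : ℕ, (b n * (r:ℂ) ^ n) * Complex.exp (n * θ * Complex.I)‖ ^ 2 := by
          rw [MeasureTheory.integral_const_mul]
          congr 1
          refine setIntegral_congr_fun measurableSet_Ioo (fun θ _ => ?_)
          rw [hsum_r θ]
      _ = r * (2 * π * ∑' n : ℕ, ‖b n * (r:ℂ) ^ n‖ ^ 2) := by
          rw [parseval_aux _ hsummable]
      _ = ∑' n : ℕ, (2 * π * ‖b n‖ ^ 2) * r ^ (2 * n + 1) := by
          rw [← tsum_mul_left, ← tsum_mul_left]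
          refine tsum_congr (fun n => ?_)
          rw [norm_mul, norm_pow, Complex.norm_real, Real.norm_eq_abs, abs_of_pos hr0]
          ring
  rw [setIntegral_congr_fun measurableSet_Ioo (fun r hr => hinner r hr)]
  -- outer integral, term by term
  have houter : (∫ r in Set.Ioo (0:ℝ) 1, ∑' n : ℕ, (2 * π * ‖b n‖ ^ 2) * r ^ (2 * n + 1))
      = ∑' n : ℕ, ∫ r in Set.Ioo (0:ℝ) 1, (2 * π * ‖b n‖ ^ 2) * r ^ (2 * n + 1) := by
    apply integral_tsum
    · intro n
      apply Continuous.aestronglyMeasurable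
      fun_prop
    · have hbound : ∀ n : ℕ, (∫⁻ r in Set.Ioo (0:ℝ) 1, ‖(2 * π * ‖b n‖ ^ 2) * r ^ (2 * n + 1)‖₊)
          ≤ (‖(2 * π * ‖b n‖ ^ 2 : ℝ)‖₊ : ENNReal) := by
        intro n
        calc (∫⁻ r in Set.Ioo (0:ℝ) 1, (‖(2 * π * ‖b n‖ ^ 2) * r ^ (2 * n + 1)‖₊ : ENNReal))
            ≤ ∫⁻ _ in Set.Ioo (0:ℝ) 1, (‖(2 * π * ‖b n‖ ^ 2 : ℝ)‖₊ : ENNReal) := by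
              apply setLIntegral_mono measurable_const
              intro r hr
              apply ENNReal.coe_le_coe.mpr
              apply le_trans (nnnorm_mul_le _ _)
              have : ‖r ^ (2 * n + 1)‖₊ ≤ 1 := by
                rw [← NNReal.coe_le_coe]
                simp only [coe_nnnorm, Real.norm_eq_abs, NNReal.coe_one]
                rw [abs_of_pos (pow_pos hr.1 _)]
                exact pow_le_one₀ hr.1.le hr.2.le
              calc ‖(2 * π * ‖b n‖ ^ 2 : ℝ)‖₊ * ‖r ^ (2 * n + 1)‖₊
                  ≤ ‖(2 * π * ‖b n‖ ^ 2 : ℝ)‖₊ * 1 := mul_le_mul_right this _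
                _ = ‖(2 * π * ‖b n‖ ^ 2 : ℝ)‖₊ := mul_one _
          _ = (‖(2 * π * ‖b n‖ ^ 2 : ℝ)‖₊ : ENNReal) * volume (Set.Ioo (0:ℝ) 1) := by
              rw [setLIntegral_const]
          _ ≤ _ := by
              rw [Real.volume_Ioo]
              norm_num
      apply ne_top_of_le_ne_top _ (ENNReal.tsum_le_tsum hbound)
      rw [ENNReal.tsum_coe_ne_top_iff_summable]
      rw [← NNReal.summable_coe]
      have : Summable fun n : ℕ => 2 * π * ‖b n‖ ^ 2 := hbs2.mul_left _
      apply this.congr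
      intro n
      have : (0:ℝ) ≤ 2 * π * ‖b n‖ ^ 2 := by positivity
      rw [coe_nnnorm, Real.norm_eq_abs, _root_.abs_of_nonneg this]
  rw [houter]
  -- compute each integral
  have heach : ∀ n : ℕ, (∫ r in Set.Ioo (0:ℝ) 1, (2 * π * ‖b n‖ ^ 2) * r ^ (2 * n + 1))
      = π * (‖b n‖ ^ 2 / (n + 1)) := by
    intro n
    rw [MeasureTheory.integral_const_mul, ← MeasureTheory.integral_Ioc_eq_integral_Ioo,
      ← intervalIntegral.integral_of_le (by norm_num : (0:ℝ) ≤ 1), integral_pow]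
    push_cast
    have hne : (2 * (n:ℝ) + 1 + 1) ≠ 0 := by positivity
    field_simp
    ring
  rw [tsum_congr heach, tsum_mul_left]

lemma sq_summable {f : ℕ → ℝ} (hf : Summable f) (h0 : ∀ n, 0 ≤ f n) :
    Summable fun n => f n ^ 2 := by
  have hpair := hf.mul_of_nonneg hf h0 h0
  have := hpair.comp_injective (i := fun n : ℕ => ((n, n) : ℕ × ℕ))
    (fun a b hab => (Prod.ext_iff.mp hab).1)
  simpa [sq] using (show Summable (fun n => f n * f n) from this)

/-- Equality case in the isoperimetric inequality: a holomorphic map of the closed disk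
fixing `0`, sending the unit circle into itself, and with area integral `π`, is a rotation. -/
theorem rotation_of_equality (g : ℂ → ℂ) (U : Set ℂ) (hU : IsOpen U)
    (hUB : Metric.closedBall (0 : ℂ) 1 ⊆ U) (hg : DifferentiableOn ℂ g U)
    (hg0 : g 0 = 0)
    (hcirc : ∀ θ : ℝ, ‖g (Complex.exp (θ * Complex.I))‖ = 1)
    (harea : (∫ z in Metric.ball (0 : ℂ) 1, ‖deriv g z‖ ^ 2) = π) :
    ∃ a : ℂ, ‖a‖ = 1 ∧ ∀ z ∈ Metric.ball (0 : ℂ) 1, g z = a * z := by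
  have hπ := Real.pi_pos
  -- find R > 1 with ball 0 R ⊆ U
  obtain ⟨δ, hδ, hsub⟩ := (isCompact_closedBall (0:ℂ) 1).exists_thickening_subset_open hU hUB
  set R : ℝ := 1 + δ with hRdef
  have hR : 1 < R := by simp [hRdef, hδ]
  have hballU : Metric.ball (0:ℂ) R ⊆ U := by
    refine subset_trans ?_ hsub
    intro x hx
    rw [Metric.mem_ball, dist_zero_right] at hx
    rw [Metric.mem_thickening_iff]
    by_cases hx1 : ‖x‖ ≤ 1
    · exact ⟨x, by simpa [Metric.mem_closedBall, dist_zero_right] using hx1, by simpa using hδ⟩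
    · push_neg at hx1
      have hx0 : x ≠ 0 := by intro h0; rw [h0, norm_zero] at hx1; linarith
      refine ⟨(‖x‖ : ℂ)⁻¹ * x, ?_, ?_⟩
      · rw [Metric.mem_closedBall, dist_zero_right, norm_mul]
        rw [norm_inv, Complex.norm_real, Real.norm_eq_abs, abs_of_pos (by positivity : (0:ℝ) < ‖x‖)]
        rw [inv_mul_cancel₀ (by positivity : (‖x‖:ℝ) ≠ 0)]
      · rw [dist_eq_norm]
        have : x - (‖x‖ : ℂ)⁻¹ * x = ((1 - (‖x‖:ℝ)⁻¹ : ℝ) : ℂ) * x := by push_cast; ring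
        rw [this, norm_mul, Complex.norm_real, Real.norm_eq_abs,
          _root_.abs_of_nonneg (by rw [sub_nonneg]; exact inv_le_one_of_one_le₀ hx1.le)]
        have hxne : ‖x‖ ≠ 0 := by positivity
        have : (1 - ‖x‖⁻¹) * ‖x‖ = ‖x‖ - 1 := by
          rw [sub_mul, one_mul, inv_mul_cancel₀ hxne]
        rw [this]
        linarith [hx, hx1]
  have hgR : DifferentiableOn ℂ g (Metric.ball 0 R) := hg.mono hballU
  have hhR : DifferentiableOn ℂ (deriv g) (Metric.ball 0 R) :=
    ((hgR.analyticOnNhd Metric.isOpen_ball).deriv).differentiableOn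
  set a : ℕ → ℂ := fun n => (Nat.factorial n : ℂ)⁻¹ * iteratedDeriv n g 0 with ha
  set b : ℕ → ℂ := fun n => (Nat.factorial n : ℂ)⁻¹ * iteratedDeriv n (deriv g) 0 with hb
  have hga : ∀ z ∈ Metric.ball (0:ℂ) R, HasSum (fun n => a n * z ^ n) (g z) :=
    fun z hz => hasSum_coeff hgR hz
  have hgb : ∀ z ∈ Metric.ball (0:ℂ) R, HasSum (fun n => b n * z ^ n) (deriv g z) :=
    fun z hz => hasSum_coeff hhR hz
  have hab : ∀ n : ℕ, b n = (n + 1 : ℂ) * a (n + 1) := by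
    intro n
    rw [ha, hb]
    simp only
    rw [← iteratedDeriv_succ']
    rw [Nat.factorial_succ]
    push_cast
    rw [mul_inv]
    have hfac : (Nat.factorial n : ℂ) ≠ 0 := by
      exact_mod_cast Nat.factorial_ne_zero n
    have hn1 : ((n:ℂ) + 1) ≠ 0 := Nat.cast_add_one_ne_zero n
    field_simp
  -- summability at radius 1
  have ht : (1 : ℝ) < (1 + R)/2 := by linarith
  have htR : (1 + R)/2 < R := by linarith
  have htball : (((1 + R)/2 : ℝ) : ℂ) ∈ Metric.ball (0:ℂ) R := by
    rw [Metric.mem_ball, dist_zero_right, Complex.norm_real, Real.norm_eq_abs,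
      abs_of_pos (by linarith)]
    exact htR
  have hsa1 : Summable fun n => ‖a n‖ := by
    have := summable_coeff (hga _ htball).summable zero_le_one ht
    simpa using this
  have hsb1 : Summable fun n => ‖b n‖ := by
    have := summable_coeff (hgb _ htball).summable zero_le_one ht
    simpa using this
  have hsa2 : Summable fun n => ‖a n‖ ^ 2 := sq_summable hsa1 (fun n => norm_nonneg _)
  have hsb2 : Summable fun n => ‖b n‖ ^ 2 := sq_summable hsb1 (fun n => norm_nonneg _)
  -- area identity
  have harea' : π * ∑' n : ℕ, ‖b n‖ ^ 2 / (n + 1) = π := by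
    rw [← area_eq hR hhR hgb hsb1 hsb2]
    rw [← harea]
  have hsum_area : ∑' n : ℕ, ‖b n‖ ^ 2 / (n + 1) = 1 := by
    have h2 : π * (∑' n : ℕ, ‖b n‖ ^ 2 / (n + 1)) = π * 1 := by rw [mul_one]; exact harea'
    exact mul_left_cancel₀ (ne_of_gt hπ) h2
  -- boundary identity
  have hbd : ∑' n : ℕ, ‖a n‖ ^ 2 = 1 := by
    have hcalc := parseval_aux a hsa1
    have hgz : ∀ θ : ℝ, (∑' n : ℕ, a n * Complex.exp (n * θ * Complex.I))
        = g (Complex.exp (θ * Complex.I)) := by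
      intro θ
      have hzball : Complex.exp ((θ:ℂ) * Complex.I) ∈ Metric.ball (0:ℂ) R := by
        rw [Metric.mem_ball, dist_zero_right, Complex.norm_exp_ofReal_mul_I]
        exact hR
      refine HasSum.tsum_eq ?_
      convert hga _ hzball using 2 with n
      rw [← Complex.exp_nat_mul]
      ring_nf
    rw [show (∫ θ in Set.Ioo (-π) π,
        ‖∑' n : ℕ, a n * Complex.exp (n * θ * Complex.I)‖ ^ 2)
        = ∫ θ in Set.Ioo (-π) π, (1:ℝ) from
      setIntegral_congr_fun measurableSet_Ioo (fun θ _ => by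
        rw [hgz θ, hcirc θ, one_pow])] at hcalc
    rw [setIntegral_const, smul_eq_mul, mul_one, measureReal_def, Real.volume_Ioo] at hcalc
    have h2π : ENNReal.toReal (ENNReal.ofReal (π - -π)) = 2 * π := by
      rw [ENNReal.toReal_ofReal (by linarith)]; ring
    rw [h2π] at hcalc
    have h2 : 2 * π * ∑' (n : ℕ), ‖a n‖ ^ 2 = 2 * π * 1 := by rw [mul_one]; exact hcalc.symm
    exact mul_left_cancel₀ (show (2*π : ℝ) ≠ 0 by positivity) h2
  -- rewrite area sum in terms of a
  have hba2 : ∀ n : ℕ, ‖b n‖ ^ 2 / (n + 1) = ((n:ℝ) + 1) * ‖a (n+1)‖ ^ 2 := by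
    intro n
    rw [hab n, norm_mul]
    have hnn : ‖((n:ℂ) + 1)‖ = ((n:ℝ) + 1) := by
      rw [show ((n:ℂ) + 1) = (((n:ℝ) + 1 : ℝ) : ℂ) by push_cast; ring, Complex.norm_real,
        Real.norm_eq_abs, _root_.abs_of_nonneg (by positivity)]
    rw [hnn, mul_pow]
    have hpos : (0:ℝ) < (n:ℝ) + 1 := by positivity
    field_simp
  have hA1 : ∑' n : ℕ, ((n:ℝ) + 1) * ‖a (n+1)‖ ^ 2 = 1 := by
    rw [show (∑' n : ℕ, ((n:ℝ) + 1) * ‖a (n+1)‖ ^ 2) = ∑' n : ℕ, ‖b n‖ ^ 2 / ((n:ℝ) + 1) from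
      tsum_congr (fun n => (hba2 n).symm), hsum_area]
  have hA1s : Summable fun n : ℕ => ((n:ℝ) + 1) * ‖a (n+1)‖ ^ 2 := by
    apply Summable.of_nonneg_of_le (fun n => by positivity) _ hsb2
    intro n
    rw [← hba2 n]
    exact div_le_self (by positivity) (by push_cast; linarith [Nat.cast_nonneg (α := ℝ) n])
  have ha0 : a 0 = 0 := by
    simp [ha, iteratedDeriv_zero, hg0]
  have hAs : Summable fun n : ℕ => ‖a (n+1)‖ ^ 2 :=
    hsa2.comp_injective (fun x y hxy => by omega)
  have hshift : ∑' n : ℕ, ‖a (n+1)‖ ^ 2 = 1 := by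
    have h0 := hsa2.tsum_eq_zero_add
    rw [hbd, ha0] at h0
    simpa using h0.symm
  have hzero : ∀ n : ℕ, ((n:ℝ)) * ‖a (n+1)‖ ^ 2 = 0 := by
    have hsubS : Summable (fun n : ℕ => (((n:ℝ)+1) * ‖a (n+1)‖^2 - ‖a (n+1)‖^2)) := hA1s.sub hAs
    have hval : (∑' n : ℕ, (((n:ℝ)+1) * ‖a (n+1)‖^2 - ‖a (n+1)‖^2)) = 0 := by
      rw [hA1s.tsum_sub hAs, hA1, hshift, sub_self]
    have hterm_eq : ∀ m : ℕ, ((m:ℝ)+1) * ‖a (m+1)‖^2 - ‖a (m+1)‖^2 = (m:ℝ) * ‖a (m+1)‖^2 := by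
      intro m; ring
    intro n
    have hle := hsubS.le_tsum n (fun m _ => by rw [hterm_eq]; positivity)
    rw [hval, hterm_eq] at hle
    have : (0:ℝ) ≤ (n:ℝ) * ‖a (n+1)‖^2 := by positivity
    linarith
  have hvanish : ∀ m : ℕ, 2 ≤ m → a m = 0 := by
    intro m hm
    obtain ⟨k, rfl⟩ : ∃ k, m = k + 2 := ⟨m - 2, by omega⟩
    have hz := hzero (k+1)
    push_cast at hz
    have hk : ((k:ℝ)+1) ≠ 0 := by positivity
    have hsq : ‖a (k+2)‖^2 = 0 := by
      rcases mul_eq_zero.mp hz with h | h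
      · exact absurd h (by positivity)
      · exact h
    have := pow_eq_zero_iff (n := 2) (by norm_num) |>.mp hsq
    rwa [norm_eq_zero] at this
  have ha1 : ‖a 1‖ = 1 := by
    have hsingle : ∑' n : ℕ, ‖a (n+1)‖^2 = ‖a 1‖^2 := by
      apply tsum_eq_single 0
      intro n hn
      have : a (n+1) = 0 := hvanish (n+1) (by omega)
      simp [this]
    rw [hsingle] at hshift
    have hfac : (‖a 1‖ - 1) * (‖a 1‖ + 1) = 0 := by nlinarith
    rcases mul_eq_zero.mp hfac with h | h
    · linarith
    · have := norm_nonneg (a 1); linarith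
  refine ⟨a 1, ?_, ?_⟩
  · exact ha1
  · intro z hz
    have hzR : z ∈ Metric.ball (0:ℂ) R := Metric.ball_subset_ball (by linarith) hz
    rw [← (hga z hzR).tsum_eq]
    rw [tsum_eq_single 1 ?_]
    · rw [pow_one]
    · intro n hn
      rcases Nat.lt_or_ge n 2 with h2 | h2
      · interval_cases n
        · simp [ha0]
        · exact absurd rfl hn
      · simp [hvanish n h2]
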